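/- arXiv:2101.12572 — 5 statements merged into one kernel-verified Lean document; each statement's English description precedes it below -/
import Mathlib

section
/- The submodule N = 4ℤ × {0} of the ℤ₂-graded ℤ-module M = ℤ × ℤ (with M₀ = ℤ × {0}, M₁ = {0} × ℤ, and R = ℤ graded trivially with R₀ = ℤ, R₁ = {0}) is a graded quasi-semiprime submodule of M but not a graded semiprime submodule of M. -/
/-- The submodule `N = 4ℤ × {0}` of the `ℤ₂`-graded `ℤ`-module `M = ℤ × ℤ`
(with `M₀ = ℤ × {0}`, `M₁ = {0} × ℤ`, and `R = ℤ` trivially graded so that every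
element of `ℤ` is homogeneous) is a proper graded submodule whose colon ideal
`(N :_ℤ M)` is a graded semiprime ideal (so `N` is graded quasi-semiprime), but
`N` is not a graded semiprime submodule. -/
theorem stmt1 :
    ∀ N : Submodule ℤ (ℤ × ℤ), N = Submodule.prod (Ideal.span {(4 : ℤ)} : Submodule ℤ ℤ) (⊥ : Submodule ℤ ℤ) →
    ∀ hM : Set (ℤ × ℤ), hM = {m : ℤ × ℤ | m.2 = 0 ∨ m.1 = 0} →
      -- N is a proper graded submodule (closed under homogeneous components)
      (N ≠ ⊤) ∧
      (∀ m ∈ N, ((m.1, (0 : ℤ)) ∈ N ∧ ((0 : ℤ), m.2) ∈ N)) ∧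
      -- (N :_ℤ M) is a graded semiprime ideal of ℤ (every element of ℤ is homogeneous)
      (N.colon ⊤ ≠ ⊤ ∧
        ∀ r s : ℤ, ∀ n : ℕ, 0 < n → r ^ n * s ∈ N.colon ⊤ → r * s ∈ N.colon ⊤) ∧
      -- but N is not a graded semiprime submodule of M
      ¬ (∀ r : ℤ, ∀ m ∈ hM, ∀ n : ℕ, 0 < n → r ^ n • m ∈ N → r • m ∈ N) := by
  intro N hN hM hMdef
  subst hN hMdef
  have hcolon : (Submodule.prod (Ideal.span {(4 : ℤ)} : Submodule ℤ ℤ)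
      (⊥ : Submodule ℤ ℤ)).colon ⊤ = ⊥ := by
    ext r
    rw [Submodule.mem_colon]
    constructor
    · intro h
      have := (h (0, 1) trivial).2
      simpa using this
    · intro hr p _
      rw [Submodule.mem_bot] at hr
      subst hr
      simpa using ⟨Ideal.zero_mem _, rfl⟩
  refine ⟨?_, ?_, ⟨?_, ?_⟩, ?_⟩
  · intro h
    have h1 : ((1 : ℤ), (0 : ℤ)) ∈ Submodule.prod (Ideal.span {(4 : ℤ)} : Submodule ℤ ℤ)
        (⊥ : Submodule ℤ ℤ) := h ▸ trivial
    have := h1.1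
    rw [SetLike.mem_coe, Ideal.mem_span_singleton] at this
    omega
  · intro m hm
    exact ⟨⟨hm.1, rfl⟩, ⟨Ideal.zero_mem _, hm.2⟩⟩
  · rw [hcolon]
    intro h
    have : (1 : ℤ) ∈ (⊥ : Ideal ℤ) := h ▸ trivial
    simpa using this
  · intro r s n hn
    rw [hcolon]
    simp only [Submodule.mem_bot]
    intro h
    rcases mul_eq_zero.mp h with h | h
    · rcases pow_eq_zero_iff hn.ne' |>.mp h with rfl
      simp
    · simp [h]
  · intro h
    have := h 2 (1, 0) (Or.inl rfl) 2 (by norm_num) (by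
      constructor
      · show ((2:ℤ)^2 • ((1:ℤ),(0:ℤ))).1 ∈ _
        rw [SetLike.mem_coe, Ideal.mem_span_singleton]
        norm_num
      · rfl)
    have h1 := this.1
    rw [SetLike.mem_coe, Ideal.mem_span_singleton] at h1
    simp at h1
end

section
/- Let M be a graded multiplication R-module and N a proper graded submodule of M. Then N is a graded quasi-semiprime submodule of M if and only if N is a graded semiprime submodule of M. -/
open DirectSum

section Defs

variable {G : Type*} [AddGroup G] [DecidableEq G]
variable {R : Type*} [CommRing R] {M : Type*} [AddCommGroup M] [Module R M]

/-- An ideal is graded if it contains all homogeneous components of its elements. -/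
def IsGradedIdeal (𝒜 : G → AddSubgroup R) [GradedRing 𝒜] (I : Ideal R) : Prop :=
  ∀ r ∈ I, ∀ g : G, (DirectSum.decompose 𝒜 r g : R) ∈ I

/-- A submodule is graded if it contains all homogeneous components of its elements. -/
def IsGradedSubmodule (ℳ : G → AddSubgroup M) [DirectSum.Decomposition ℳ]
    (N : Submodule R M) : Prop :=
  ∀ m ∈ N, ∀ g : G, (DirectSum.decompose ℳ m g : M) ∈ N

/-- A graded semiprime ideal: proper, graded, and r^n*s ∈ I implies r*s ∈ I for homogeneous r,s. -/
def IsGradedSemiprimeIdeal (𝒜 : G → AddSubgroup R) [GradedRing 𝒜] (I : Ideal R) : Prop :=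
  I ≠ ⊤ ∧ IsGradedIdeal 𝒜 I ∧
    ∀ r s : R, SetLike.IsHomogeneousElem 𝒜 r → SetLike.IsHomogeneousElem 𝒜 s →
      ∀ n : ℕ, 0 < n → r ^ n * s ∈ I → r * s ∈ I

/-- A graded prime ideal. -/
def IsGradedPrimeIdeal (𝒜 : G → AddSubgroup R) [GradedRing 𝒜] (I : Ideal R) : Prop :=
  I ≠ ⊤ ∧ IsGradedIdeal 𝒜 I ∧
    ∀ r s : R, SetLike.IsHomogeneousElem 𝒜 r → SetLike.IsHomogeneousElem 𝒜 s →
      r * s ∈ I → r ∈ I ∨ s ∈ I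

/-- A graded primary ideal. -/
def IsGradedPrimaryIdeal (𝒜 : G → AddSubgroup R) [GradedRing 𝒜] (I : Ideal R) : Prop :=
  I ≠ ⊤ ∧ IsGradedIdeal 𝒜 I ∧
    ∀ r s : R, SetLike.IsHomogeneousElem 𝒜 r → SetLike.IsHomogeneousElem 𝒜 s →
      r * s ∈ I → r ∈ I ∨ ∃ n : ℕ, 0 < n ∧ s ^ n ∈ I

/-- A graded maximal ideal: proper graded ideal maximal among proper graded ideals. -/
def IsGradedMaximalIdeal (𝒜 : G → AddSubgroup R) [GradedRing 𝒜] (I : Ideal R) : Prop :=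
  I ≠ ⊤ ∧ IsGradedIdeal 𝒜 I ∧
    ∀ J : Ideal R, IsGradedIdeal 𝒜 J → I ≤ J → J ≠ ⊤ → J = I

/-- A graded semiprime submodule. -/
def IsGradedSemiprimeSubmodule (𝒜 : G → AddSubgroup R) (ℳ : G → AddSubgroup M)
    [DirectSum.Decomposition ℳ] (N : Submodule R M) : Prop :=
  N ≠ ⊤ ∧ IsGradedSubmodule ℳ N ∧
    ∀ (r : R) (m : M), SetLike.IsHomogeneousElem 𝒜 r → SetLike.IsHomogeneousElem ℳ m →
      ∀ n : ℕ, 0 < n → r ^ n • m ∈ N → r • m ∈ N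

/-- A graded quasi-semiprime submodule: proper graded submodule whose colon ideal
`(N :_R M)` is a graded semiprime ideal. -/
def IsGradedQuasiSemiprimeSubmodule (𝒜 : G → AddSubgroup R) [GradedRing 𝒜]
    (ℳ : G → AddSubgroup M) [DirectSum.Decomposition ℳ] (N : Submodule R M) : Prop :=
  N ≠ ⊤ ∧ IsGradedSubmodule ℳ N ∧ IsGradedSemiprimeIdeal 𝒜 (N.colon ⊤)

/-- A graded multiplication module: every graded submodule N equals (N :_R M)M. -/
def IsGradedMultiplicationModule (𝒜 : G → AddSubgroup R) [GradedRing 𝒜]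
    (ℳ : G → AddSubgroup M) [DirectSum.Decomposition ℳ] : Prop :=
  ∀ N : Submodule R M, IsGradedSubmodule ℳ N → N = (N.colon ⊤) • (⊤ : Submodule R M)

end Defs

section Aux
variable {G : Type*} [AddGroup G] [DecidableEq G]
variable {R : Type*} [CommRing R] {M : Type*} [AddCommGroup M] [Module R M]
variable (𝒜 : G → AddSubgroup R) [GradedRing 𝒜]
variable (ℳ : G → AddSubgroup M) [DirectSum.Decomposition ℳ] [SetLike.GradedSMul 𝒜 ℳ]

lemma comp_smul (s : R) {x : M} {h : G} (hx : x ∈ ℳ h) (g : G) :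
    (DirectSum.decompose ℳ (s • x) (g + h) : M) = (DirectSum.decompose 𝒜 s g : R) • x := by
  classical
  have hmem : ∀ g' : G, ((DirectSum.decompose 𝒜 s g' : R) • x) ∈ ℳ (g' + h) := by
    intro g'
    have := SetLike.GradedSMul.smul_mem (A := 𝒜) (B := ℳ)
      (SetLike.coe_mem (DirectSum.decompose 𝒜 s g')) hx
    rwa [vadd_eq_add] at this
  have key : ∀ g' : G, (DirectSum.decompose ℳ ((DirectSum.decompose 𝒜 s g' : R) • x) (g + h) : M)
      = if g' = g then (DirectSum.decompose 𝒜 s g : R) • x else 0 := by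
    intro g'
    by_cases hg : g' = g
    · subst hg
      rw [if_pos rfl]
      exact DirectSum.decompose_of_mem_same ℳ (hmem g')
    · rw [if_neg hg]
      exact DirectSum.decompose_of_mem_ne ℳ (hmem g') (by
        intro hc; exact hg (add_right_cancel hc))
  conv_lhs => rw [← DirectSum.sum_support_decompose 𝒜 s, Finset.sum_smul,
    DirectSum.decompose_sum, DFinsupp.finset_sum_apply]
  rw [AddSubmonoidClass.coe_finset_sum]
  rw [Finset.sum_congr rfl fun g' _ => key g']
  rw [Finset.sum_ite_eq' (DirectSum.decompose 𝒜 s).support g]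
  by_cases hg : g ∈ (DirectSum.decompose 𝒜 s).support
  · simp [hg]
  · rw [if_neg hg]
    rw [DFinsupp.notMem_support_iff] at hg
    simp [hg]


lemma colon_graded {N : Submodule R M} (hN : IsGradedSubmodule ℳ N) :
    IsGradedIdeal 𝒜 (N.colon ⊤) := by
  classical
  intro s hs g
  rw [Submodule.mem_colon]
  intro x _
  rw [← DirectSum.sum_support_decompose ℳ x, Finset.smul_sum]
  apply Submodule.sum_mem
  intro h _
  have h1 : s • (DirectSum.decompose ℳ x h : M) ∈ N :=
    Submodule.mem_colon.mp hs _ (Set.mem_univ _)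
  have h2 := hN _ h1 (g + h)
  rwa [comp_smul 𝒜 ℳ s (SetLike.coe_mem _) g] at h2

include 𝒜 in
lemma span_singleton_graded {m : M} (hm : SetLike.IsHomogeneousElem ℳ m) :
    IsGradedSubmodule ℳ (Submodule.span R {m}) := by
  obtain ⟨h, hmh⟩ := hm
  intro x hx g
  rw [Submodule.mem_span_singleton] at hx
  obtain ⟨t, rfl⟩ := hx
  have key := comp_smul 𝒜 ℳ t hmh (g - h)
  rw [sub_add_cancel] at key
  rw [key]
  exact Submodule.mem_span_singleton.mpr ⟨_, rfl⟩

end Aux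


variable {G : Type*} [AddGroup G] [DecidableEq G]
variable {R : Type*} [CommRing R] {M : Type*} [AddCommGroup M] [Module R M]
variable (𝒜 : G → AddSubgroup R) [GradedRing 𝒜]
variable (ℳ : G → AddSubgroup M) [DirectSum.Decomposition ℳ] [SetLike.GradedSMul 𝒜 ℳ]

theorem stmt3 (hM : IsGradedMultiplicationModule 𝒜 ℳ) (N : Submodule R M) (hNt : N ≠ ⊤)
    (hNg : IsGradedSubmodule ℳ N) :
    IsGradedQuasiSemiprimeSubmodule 𝒜 ℳ N ↔ IsGradedSemiprimeSubmodule 𝒜 ℳ N := by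
  classical
  constructor
  · rintro ⟨-, -, hItop, hIgr, hIsp⟩
    refine ⟨hNt, hNg, ?_⟩
    intro r m hr hm n hn hrnm
    have hPg := span_singleton_graded 𝒜 ℳ hm
    have hPeq := hM (Submodule.span R {m}) hPg
    set J := (Submodule.span R {m}).colon ⊤ with hJ
    have hJg : IsGradedIdeal 𝒜 J := colon_graded 𝒜 ℳ hPg
    have hstep : ∀ j ∈ J, r ^ n * j ∈ N.colon ⊤ := by
      intro j hj
      rw [Submodule.mem_colon]
      intro x _
      have hjx : j • x ∈ Submodule.span R {m} :=
        Submodule.mem_colon.mp hj x (Set.mem_univ _)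
      rw [Submodule.mem_span_singleton] at hjx
      obtain ⟨t, ht⟩ := hjx
      have heq : (r ^ n * j) • x = t • (r ^ n • m) := by
        rw [mul_smul, ← ht, smul_comm]
      rw [heq]
      exact Submodule.smul_mem N t hrnm
    have hrJ : ∀ j ∈ J, r * j ∈ N.colon ⊤ := by
      intro j hj
      have hdec : j = ∑ g ∈ (DirectSum.decompose 𝒜 j).support,
          (DirectSum.decompose 𝒜 j g : R) := (DirectSum.sum_support_decompose 𝒜 j).symm
      rw [hdec, Finset.mul_sum]
      apply Submodule.sum_mem
      intro g _
      exact hIsp r _ hr ⟨g, SetLike.coe_mem _⟩ n hn (hstep _ (hJg j hj g))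
    have hmP : m ∈ J • (⊤ : Submodule R M) := by
      rw [← hPeq]; exact Submodule.mem_span_singleton_self m
    have hfin : r • m ∈ (N.colon ⊤) • (⊤ : Submodule R M) := by
      refine Submodule.smul_induction_on hmP ?_ ?_
      · intro j hj x _
        rw [← mul_smul]
        exact Submodule.smul_mem_smul (hrJ j hj) Submodule.mem_top
      · intro x y hx hy
        rw [smul_add]; exact Submodule.add_mem _ hx hy
    rwa [← hM N hNg] at hfin
  · rintro ⟨-, -, hsp⟩
    refine ⟨hNt, hNg, ?_, colon_graded 𝒜 ℳ hNg, ?_⟩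
    · intro hc
      apply hNt
      rw [eq_top_iff]
      intro x _
      have h1 : (1 : R) ∈ N.colon ⊤ := by rw [hc]; trivial
      simpa using Submodule.mem_colon.mp h1 x (Set.mem_univ _)
    · intro r s hr hs n hn hI
      rw [Submodule.mem_colon]
      intro x _
      rw [← DirectSum.sum_support_decompose ℳ x, Finset.smul_sum]
      apply Submodule.sum_mem
      intro h _
      have h1 : (r ^ n * s) • (DirectSum.decompose ℳ x h : M) ∈ N :=
        Submodule.mem_colon.mp hI _ (Set.mem_univ _)
      rw [mul_smul] at h1
      have hsxh : SetLike.IsHomogeneousElem ℳ (s • (DirectSum.decompose ℳ x h : M)) := by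
        obtain ⟨gs, hgs⟩ := hs
        exact ⟨gs +ᵥ h, SetLike.GradedSMul.smul_mem hgs (SetLike.coe_mem _)⟩
      have h2 := hsp r _ hr hsxh n hn h1
      rwa [← mul_smul] at h2
end

section
/- Let N be a graded quasi-semiprime submodule of a graded R-module M. If (N :_R M) is a graded primary ideal of R, then (N :_R M) is a graded prime ideal of R. -/
open DirectSum

variable {G : Type*} [AddGroup G] [DecidableEq G]
variable {R : Type*} [CommRing R] {M : Type*} [AddCommGroup M] [Module R M]
variable (𝒜 : G → AddSubgroup R) [GradedRing 𝒜]
variable (ℳ : G → AddSubgroup M) [DirectSum.Decomposition ℳ] [SetLike.GradedSMul 𝒜 ℳ]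

theorem stmt5 (N : Submodule R M) (hN : IsGradedQuasiSemiprimeSubmodule 𝒜 ℳ N)
    (hprim : IsGradedPrimaryIdeal 𝒜 (N.colon ⊤)) :
    IsGradedPrimeIdeal 𝒜 (N.colon ⊤) := by
  obtain ⟨hne, hgr, hsemi⟩ := hN
  obtain ⟨hne2, hgr2, hsemi2⟩ := hsemi
  obtain ⟨_, _, hprim'⟩ := hprim
  refine ⟨hne2, hgr2, fun r s hr hs hrs => ?_⟩
  rcases hprim' r s hr hs hrs with h | ⟨n, hn, hsn⟩
  · exact Or.inl h
  · right
    have := hsemi2 s 1 hs (SetLike.isHomogeneousElem_one 𝒜) n hn (by simpa using hsn)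
    simpa using this
end

section
/- Let f : M → M′ be a graded epimorphism of graded R-modules and N a graded quasi-semiprime submodule of M with ker(f) ⊆ N. Then f(N) is a graded quasi-semiprime submodule of M′. -/
open DirectSum

variable {G : Type*} [AddGroup G] [DecidableEq G]
variable {R : Type*} [CommRing R] {M : Type*} [AddCommGroup M] [Module R M]
variable (𝒜 : G → AddSubgroup R) [GradedRing 𝒜]
variable (ℳ : G → AddSubgroup M) [DirectSum.Decomposition ℳ] [SetLike.GradedSMul 𝒜 ℳ]

variable {M₂ : Type*} [AddCommGroup M₂] [Module R M₂]
variable (ℳ₂ : G → AddSubgroup M₂) [DirectSum.Decomposition ℳ₂] [SetLike.GradedSMul 𝒜 ℳ₂]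

lemma decompose_map_comm (f : M →ₗ[R] M₂) (hgr : ∀ g : G, ∀ m ∈ ℳ g, f m ∈ ℳ₂ g)
    (m : M) (g : G) :
    (DirectSum.decompose ℳ₂ (f m) g : M₂) = f (DirectSum.decompose ℳ m g) := by
  induction m using DirectSum.Decomposition.inductionOn ℳ with
  | zero => simp
  | @homogeneous i x =>
    obtain ⟨x, hx⟩ := x
    by_cases h : i = g
    · subst h
      rw [DirectSum.decompose_of_mem_same ℳ hx,
        DirectSum.decompose_of_mem_same ℳ₂ (hgr _ _ hx)]
    · rw [DirectSum.decompose_of_mem_ne ℳ hx h,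
        DirectSum.decompose_of_mem_ne ℳ₂ (hgr _ _ hx) h, map_zero]
  | add x y hx hy =>
    rw [map_add, DirectSum.decompose_add, DirectSum.decompose_add]
    simp only [DirectSum.add_apply, AddSubgroup.coe_add, hx, hy, map_add]

theorem stmt7 (f : M →ₗ[R] M₂) (hgr : ∀ g : G, ∀ m ∈ ℳ g, f m ∈ ℳ₂ g)
    (hsurj : Function.Surjective f) (N : Submodule R M)
    (hN : IsGradedQuasiSemiprimeSubmodule 𝒜 ℳ N) (hker : LinearMap.ker f ≤ N) :
    IsGradedQuasiSemiprimeSubmodule 𝒜 ℳ₂ (N.map f) := by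
  obtain ⟨hNtop, hNgr, hNsp⟩ := hN
  have hcomap : Submodule.comap f (N.map f) = N := by
    ext m
    simp only [Submodule.mem_comap, Submodule.mem_map]
    constructor
    · rintro ⟨n, hn, hfn⟩
      have : m - n ∈ LinearMap.ker f := by simp [LinearMap.mem_ker, hfn]
      have := hker this
      have := N.add_mem this hn
      simpa using this
    · exact fun hm => ⟨m, hm, rfl⟩
  have hcolon : (N.map f).colon ⊤ = N.colon ⊤ := by
    ext r
    simp only [Submodule.mem_colon]
    constructor
    · intro h m _
      have := h (f m) trivial
      rw [← map_smul] at this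
      rw [← hcomap]
      exact this
    · intro h m₂ _
      obtain ⟨m, rfl⟩ := hsurj m₂
      rw [← map_smul]
      exact Submodule.mem_map_of_mem (h m trivial)
  refine ⟨?_, ?_, ?_⟩
  · intro h
    apply hNtop
    rw [← hcomap, h, Submodule.comap_top]
  · rintro m₂ hm₂ g
    obtain ⟨m, hm, rfl⟩ := hm₂
    rw [decompose_map_comm ℳ ℳ₂ f hgr]
    exact Submodule.mem_map_of_mem (hNgr m hm g)
  · rw [hcolon]
    exact hNsp
end

section
/- If M is a graded semiprime module (i.e., the zero submodule is a graded semiprime submodule of M), then M is a graded quasi-semiprime module, meaning Ann_R(N) is a graded semiprime ideal of R for every non-zero graded submodule N of M. -/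
open DirectSum

variable {G : Type*} [AddGroup G] [DecidableEq G]
variable {R : Type*} [CommRing R] {M : Type*} [AddCommGroup M] [Module R M]
variable (𝒜 : G → AddSubgroup R) [GradedRing 𝒜]
variable (ℳ : G → AddSubgroup M) [DirectSum.Decomposition ℳ] [SetLike.GradedSMul 𝒜 ℳ]

lemma aux_smul_comp {G : Type*} [AddGroup G] [DecidableEq G]
    {R : Type*} [CommRing R] {M : Type*} [AddCommGroup M] [Module R M]
    (𝒜 : G → AddSubgroup R) [GradedRing 𝒜]
    (ℳ : G → AddSubgroup M) [DirectSum.Decomposition ℳ] [SetLike.GradedSMul 𝒜 ℳ]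
    (r : R) (m : M) (i : G) (hm : m ∈ ℳ i) (h0 : r • m = 0) (g : G) :
    (DirectSum.decompose 𝒜 r g : R) • m = 0 := by
  classical
  have hmem : ∀ g' : G, (DirectSum.decompose 𝒜 r g' : R) • m ∈ ℳ (g' + i) := fun g' =>
    (SetLike.GradedSMul.smul_mem (SetLike.coe_mem (DirectSum.decompose 𝒜 r g')) hm :
      _ ∈ ℳ (g' + i))
  have key : (0 : M) = ∑ g' ∈ (DirectSum.decompose 𝒜 r).support,
      (DirectSum.decompose ℳ ((DirectSum.decompose 𝒜 r g' : R) • m) (g + i) : M) := by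
    calc (0 : M) = (DirectSum.decompose ℳ (r • m) (g + i) : M) := by rw [h0]; simp
    _ = (DirectSum.decompose ℳ ((∑ g' ∈ (DirectSum.decompose 𝒜 r).support,
          (DirectSum.decompose 𝒜 r g' : R)) • m) (g + i) : M) := by
        rw [DirectSum.sum_support_decompose 𝒜 r]
    _ = _ := by
        rw [Finset.sum_smul, DirectSum.decompose_sum]
        rw [DFinsupp.finset_sum_apply, AddSubmonoidClass.coe_finset_sum]
  rw [Finset.sum_eq_single g] at key
  · by_cases hg : g ∈ (DirectSum.decompose 𝒜 r).support
    · rw [key, DirectSum.decompose_of_mem_same ℳ (hmem g)]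
    · rw [DFinsupp.notMem_support_iff] at hg
      rw [hg]; simp
  · intro g' _ hne
    exact DirectSum.decompose_of_mem_ne ℳ (hmem g') (by simpa using hne)
  · intro hg
    rw [DFinsupp.notMem_support_iff] at hg
    rw [hg]; simp

theorem stmt11 (h : IsGradedSemiprimeSubmodule 𝒜 ℳ (⊥ : Submodule R M)) :
    ∀ N : Submodule R M, N ≠ ⊥ → IsGradedSubmodule ℳ N →
      IsGradedSemiprimeIdeal 𝒜 N.annihilator := by
  classical
  intro N hN hNg
  obtain ⟨-, -, hsp⟩ := h
  refine ⟨?_, ?_, ?_⟩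
  · -- Ann N ≠ ⊤
    intro htop
    apply hN
    rw [eq_bot_iff]
    intro m hm
    have h1 : (1 : R) ∈ N.annihilator := htop ▸ Submodule.mem_top
    have := Submodule.mem_annihilator.mp h1 m hm
    simpa using this
  · -- graded
    intro r hr g
    rw [Submodule.mem_annihilator] at hr ⊢
    intro m hm
    -- decompose m into homogeneous components, each in N
    have : ∀ i : G, (DirectSum.decompose 𝒜 r g : R) • (DirectSum.decompose ℳ m i : M) = 0 := by
      intro i
      exact aux_smul_comp 𝒜 ℳ r _ i (SetLike.coe_mem _)
        (hr _ (hNg m hm i)) g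
    calc (DirectSum.decompose 𝒜 r g : R) • m
        = (DirectSum.decompose 𝒜 r g : R) • ∑ i ∈ (DirectSum.decompose ℳ m).support,
            (DirectSum.decompose ℳ m i : M) := by
          rw [DirectSum.sum_support_decompose ℳ m]
      _ = 0 := by rw [Finset.smul_sum]; exact Finset.sum_eq_zero fun i _ => this i
  · -- semiprime condition
    intro r s hr hs n hn hrs
    rw [Submodule.mem_annihilator] at hrs ⊢
    intro m hm
    calc (r * s) • m
        = (r * s) • ∑ i ∈ (DirectSum.decompose ℳ m).support,
            (DirectSum.decompose ℳ m i : M) := by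
          rw [DirectSum.sum_support_decompose ℳ m]
      _ = 0 := by
        rw [Finset.smul_sum]
        refine Finset.sum_eq_zero fun i _ => ?_
        have hmi : (DirectSum.decompose ℳ m i : M) ∈ N := hNg m hm i
        obtain ⟨j, hj⟩ := hs
        have hsm : SetLike.IsHomogeneousElem ℳ (s • (DirectSum.decompose ℳ m i : M)) :=
          ⟨j + i, (SetLike.GradedSMul.smul_mem hj (SetLike.coe_mem (DirectSum.decompose ℳ m i)) : _ ∈ ℳ (j + i))⟩
        have hpow : r ^ n • (s • (DirectSum.decompose ℳ m i : M)) ∈ (⊥ : Submodule R M) := by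
          rw [Submodule.mem_bot, ← mul_smul]
          exact hrs _ hmi
        have := hsp r (s • (DirectSum.decompose ℳ m i : M)) hr hsm n hn hpow
        rw [Submodule.mem_bot, ← mul_smul] at this
        exact this
end
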